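/- Let χ ∈ X_fin (finite Kharchenko root system). Then dim U^-(χ) < ∞ if and only if for every χ' ∼ χ (i.e. χ' obtained from χ by a finite sequence of Lusztig twists i★) and for every i ∈ I, χ'(α_i, α_i) is a root of unity. -/

import Mathlib

/-- `ℤΠ`, the free `ℤ`-module with basis `Π = {α_1,…,α_N}`. -/
abbrev Mz (N : ℕ) := Fin N →₀ ℤ

/-- The simple "root" `α_i`, the `i`-th basis element of `ℤΠ`. -/
noncomputable def alphav {N : ℕ} (i : Fin N) : Mz N := Finsupp.single i 1

/-- A bi-homomorphism `χ : ℤΠ × ℤΠ → ℂ*`. -/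
def IsBihom {N : ℕ} (χ : Mz N → Mz N → ℂˣ) : Prop :=
  (∀ a b c : Mz N, χ a (b + c) = χ a b * χ a c) ∧
  (∀ a b c : Mz N, χ (a + b) c = χ a c * χ b c)

/-- `(m)_t := 1 + t + ⋯ + t^{m-1}`. -/
noncomputable def qnum (m : ℕ) (t : ℂ) : ℂ := ∑ j ∈ Finset.range m, t ^ j

/-- `(m)_t! := ∏_{j=1}^m (j)_t`. -/
noncomputable def qfact (m : ℕ) (t : ℂ) : ℂ := ∏ j ∈ Finset.range m, qnum (j + 1) t

/-- `(m; t₁, t₂)! := ∏_{j=1}^m (1 - t₁^{j-1} t₂)`. -/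
noncomputable def tfact (m : ℕ) (t₁ t₂ : ℂ) : ℂ := ∏ j ∈ Finset.range m, (1 - t₁ ^ j * t₂)

/-- The Cartan entry `c` (off-diagonal part) attached to `q = q_{ii}` and `r = q_{ij}q_{ji}`:
`⊥` (i.e. `-∞`) if `(m)_q!(m;q,r)! ≠ 0` for all `m`, and otherwise
`-Max{m ∈ ℤ≥0 | (m)_q!(m;q,r)! ≠ 0}`. -/
noncomputable def cEntry (q r : ℂ) : WithBot ℤ :=
  letI := Classical.propDecidable
  if ∀ m : ℕ, qfact m q * tfact m q r ≠ 0 then ⊥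
  else ((-((sSup {m : ℕ | qfact m q * tfact m q r ≠ 0} : ℕ) : ℤ) : ℤ) : WithBot ℤ)

/-- The generalized Cartan matrix `c^χ_{ij}` of a bi-homomorphism `χ`. -/
noncomputable def cMat {N : ℕ} (χ : Mz N → Mz N → ℂˣ) (i j : Fin N) : WithBot ℤ :=
  if i = j then 2
  else cEntry (χ (alphav i) (alphav i))
    ((χ (alphav i) (alphav j) : ℂ) * (χ (alphav j) (alphav i) : ℂ))

/-- `c^χ_{ij}` as an integer (junk value `0` in the `-∞` case). -/
noncomputable def cInt {N : ℕ} (χ : Mz N → Mz N → ℂˣ) (i j : Fin N) : ℤ :=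
  (cMat χ i j).unbotD 0

/-- The reflection `s^χ_i ∈ Aut_ℤ(ℤΠ)`, `s^χ_i(α_j) = α_j - c^χ_{ij} α_i`,
extended `ℤ`-linearly. -/
noncomputable def sMap {N : ℕ} (χ : Mz N → Mz N → ℂˣ) (i : Fin N) (v : Mz N) : Mz N :=
  v - (v.sum fun j n => n * cInt χ i j) • alphav i

/-- The Lusztig twist `i★χ`, `(i★χ)(α,β) := χ(s^χ_i α, s^χ_i β)`. -/
noncomputable def starB {N : ℕ} (i : Fin N) (χ : Mz N → Mz N → ℂˣ) :
    Mz N → Mz N → ℂˣ :=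
  fun a b => χ (sMap χ i a) (sMap χ i b)

/-- χ' is obtained from χ by a finite sequence of Lusztig twists (χ' ∼ χ). -/
def Reachable {N : ℕ} (χ χ' : Mz N → Mz N → ℂˣ) : Prop :=
  ∃ l : List (Fin N), χ' = l.foldl (fun ψ i => starB i ψ) χ

/-- The iterated twists χ_{f,t}: χ_{f,0} = χ and χ_{f,t} = f(t)★χ_{f,t-1}. -/
noncomputable def chif {N : ℕ} (χ : Mz N → Mz N → ℂˣ) (f : ℕ → Fin N) :
    ℕ → (Mz N → Mz N → ℂˣ)
  | 0 => χ
  | (t + 1) => starB (f (t + 1)) (chif χ f t)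

/-- The partial products w_t = s^{χ_{f,1}}_{f(1)} ∘ ⋯ ∘ s^{χ_{f,t}}_{f(t)}. -/
noncomputable def wt {N : ℕ} (χ : Mz N → Mz N → ℂˣ) (f : ℕ → Fin N) :
    ℕ → (Mz N → Mz N)
  | 0 => id
  | (t + 1) => wt χ f t ∘ sMap (chif χ f (t + 1)) (f (t + 1))

/-- The nonzero elements of ℤ≥0 Π. -/
def PosCone (N : ℕ) : Set (Mz N) := {v | v ≠ 0 ∧ ∀ k, 0 ≤ v k}

/-- The elements of -ℤ≥0 Π. -/
def NegCone (N : ℕ) : Set (Mz N) := {v | ∀ k, v k ≤ 0}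

/-- The height h^χ(α) of a root: ⊤ if (m)_{χ(α,α)}! ≠ 0 for all m, and otherwise
Max{m : (m)_{χ(α,α)}! ≠ 0}. -/
noncomputable def hbound (q : ℂ) : ℕ∞ :=
  letI := Classical.propDecidable
  if ∀ m : ℕ, qfact m q ≠ 0 then ⊤
  else ((sSup {m : ℕ | qfact m q ≠ 0} : ℕ) : ℕ∞)


section Helpers
variable {N : ℕ}

/-- The coefficient functional used in `sMap`. -/
noncomputable def Lf (χ : Mz N → Mz N → ℂˣ) (i : Fin N) (v : Mz N) : ℤ :=
  v.sum fun j n => n * cInt χ i j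

lemma sMap_def (χ : Mz N → Mz N → ℂˣ) (i : Fin N) (v : Mz N) :
    sMap χ i v = v - Lf χ i v • alphav i := rfl

lemma cInt_diag (χ : Mz N → Mz N → ℂˣ) (i : Fin N) : cInt χ i i = 2 := by
  simp [cInt, cMat]

lemma Lf_add (χ : Mz N → Mz N → ℂˣ) (i : Fin N) (a b : Mz N) :
    Lf χ i (a + b) = Lf χ i a + Lf χ i b := by
  unfold Lf
  exact Finsupp.sum_add_index' (fun j => zero_mul _) (fun j b₁ b₂ => add_mul b₁ b₂ _)

lemma Lf_sub (χ : Mz N → Mz N → ℂˣ) (i : Fin N) (a b : Mz N) :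
    Lf χ i (a - b) = Lf χ i a - Lf χ i b := by
  unfold Lf
  exact Finsupp.sum_sub_index (fun j b₁ b₂ => sub_mul b₁ b₂ _)

lemma Lf_single (χ : Mz N → Mz N → ℂˣ) (i j : Fin N) (z : ℤ) :
    Lf χ i (Finsupp.single j z) = z * cInt χ i j := by
  unfold Lf
  exact Finsupp.sum_single_index (zero_mul _)

lemma smul_alphav (i : Fin N) (z : ℤ) : z • alphav i = Finsupp.single i z := by
  unfold alphav
  rw [Finsupp.smul_single', mul_one]

lemma sMap_add (χ : Mz N → Mz N → ℂˣ) (i : Fin N) (a b : Mz N) :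
    sMap χ i (a + b) = sMap χ i a + sMap χ i b := by
  rw [sMap_def, sMap_def, sMap_def, Lf_add, add_smul]
  abel

lemma sMap_alphav_self (χ : Mz N → Mz N → ℂˣ) (i : Fin N) :
    sMap χ i (alphav i) = -alphav i := by
  have h1 : Lf χ i (alphav i) = 2 := by
    rw [show (alphav i : Mz N) = Finsupp.single i 1 from rfl, Lf_single, cInt_diag]; ring
  rw [sMap_def, h1, two_smul]
  abel

lemma sMap_invol (χ : Mz N → Mz N → ℂˣ) (i : Fin N) (v : Mz N) :
    sMap χ i (sMap χ i v) = v := by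
  have hL : Lf χ i (sMap χ i v) = - Lf χ i v := by
    rw [sMap_def, Lf_sub, smul_alphav, Lf_single, cInt_diag]
    ring
  rw [sMap_def (v := sMap χ i v), hL, sMap_def, neg_smul]
  abel

lemma starB_bihom (χ : Mz N → Mz N → ℂˣ) (i : Fin N) (h : IsBihom χ) :
    IsBihom (starB i χ) := by
  constructor
  · intro a b c
    unfold starB
    rw [sMap_add, h.1]
  · intro a b c
    unfold starB
    rw [sMap_add, h.2]

lemma bihom_zero_right (χ : Mz N → Mz N → ℂˣ) (h : IsBihom χ) (a : Mz N) :
    χ a 0 = 1 := by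
  have := h.1 a 0 0
  rw [add_zero] at this
  exact (left_eq_mul.mp this)

lemma bihom_zero_left (χ : Mz N → Mz N → ℂˣ) (h : IsBihom χ) (b : Mz N) :
    χ 0 b = 1 := by
  have := h.2 0 0 b
  rw [add_zero] at this
  exact (left_eq_mul.mp this)

lemma bihom_neg_right (χ : Mz N → Mz N → ℂˣ) (h : IsBihom χ) (a b : Mz N) :
    χ a (-b) = (χ a b)⁻¹ := by
  have := h.1 a b (-b)
  rw [add_neg_cancel, bihom_zero_right χ h] at this
  exact eq_inv_of_mul_eq_one_left (by rw [mul_comm, ← this])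

lemma bihom_neg_left (χ : Mz N → Mz N → ℂˣ) (h : IsBihom χ) (a b : Mz N) :
    χ (-a) b = (χ a b)⁻¹ := by
  have := h.2 a (-a) b
  rw [add_neg_cancel, bihom_zero_left χ h] at this
  exact eq_inv_of_mul_eq_one_left (by rw [mul_comm, ← this])

lemma bihom_neg_neg (χ : Mz N → Mz N → ℂˣ) (h : IsBihom χ) (a b : Mz N) :
    χ (-a) (-b) = χ a b := by
  rw [bihom_neg_left χ h, bihom_neg_right χ h, inv_inv]

lemma reachable_refl (χ : Mz N → Mz N → ℂˣ) : Reachable χ χ := ⟨[], rfl⟩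

lemma reachable_foldl (χ : Mz N → Mz N → ℂˣ) (l : List (Fin N)) :
    Reachable χ (l.foldl (fun ψ i => starB i ψ) χ) := ⟨l, rfl⟩

lemma bihom_foldl (χ : Mz N → Mz N → ℂˣ) (h : IsBihom χ) (l : List (Fin N)) :
    IsBihom (l.foldl (fun ψ i => starB i ψ) χ) := by
  induction l using List.reverseRecOn with
  | nil => exact h
  | append_singleton l j ih =>
      rw [List.foldl_append]
      exact starB_bihom _ j ih

end Helpers

section Helpers2
variable {N : ℕ}

lemma chif_reachable (χ : Mz N → Mz N → ℂˣ) (f : ℕ → Fin N) (t : ℕ) :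
    Reachable χ (chif χ f t) := by
  induction t with
  | zero => exact reachable_refl χ
  | succ t ih =>
      obtain ⟨l, hl⟩ := ih
      refine ⟨l ++ [f (t + 1)], ?_⟩
      rw [List.foldl_append, ← hl]
      rfl

lemma easyClaim (χ : Mz N → Mz N → ℂˣ) (hχ : IsBihom χ)
    (Rp : (Mz N → Mz N → ℂˣ) → Set (Mz N))
    (hRsimple : ∀ ψ, Reachable χ ψ → ∀ i : Fin N, alphav i ∈ Rp ψ)
    (hRrefl : ∀ ψ, Reachable χ ψ → ∀ i : Fin N,
      sMap ψ i '' (Rp ψ \ {alphav i}) = Rp (starB i ψ) \ {alphav i}) :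
    ∀ l : List (Fin N), ∀ β ∈ Rp (l.foldl (fun ψ i => starB i ψ) χ),
      ∃ γ ∈ Rp χ, l.foldl (fun ψ i => starB i ψ) χ β β = χ γ γ := by
  intro l
  induction l using List.reverseRecOn with
  | nil => intro β hβ; exact ⟨β, hβ, rfl⟩
  | append_singleton l j ih =>
      intro β hβ
      rw [List.foldl_append] at *
      set ψ := l.foldl (fun ψ i => starB i ψ) χ with hψ
      have hreach : Reachable χ ψ := reachable_foldl χ l
      have hbih : IsBihom ψ := bihom_foldl χ hχ l
      simp only [List.foldl_cons, List.foldl_nil] at *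
      by_cases hβj : β = alphav j
      · subst hβj
        have : starB j ψ (alphav j) (alphav j) = ψ (alphav j) (alphav j) := by
          unfold starB
          rw [sMap_alphav_self, bihom_neg_neg ψ hbih]
        rw [this]
        exact ih (alphav j) (hRsimple ψ hreach j)
      · have hmem : β ∈ Rp (starB j ψ) \ {alphav j} := ⟨hβ, hβj⟩
        rw [← hRrefl ψ hreach j] at hmem
        obtain ⟨w, hw, hwβ⟩ := hmem
        have : starB j ψ β β = ψ w w := by
          unfold starB
          rw [← hwβ, sMap_invol]
        rw [this]
        exact ih w hw.1

end Helpers2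

section Helpers3
variable {N : ℕ}

/-- The backwards sequence of reflections applied to β. -/
noncomputable def vseq (χ : Mz N → Mz N → ℂˣ) (f : ℕ → Fin N) (β : Mz N) : ℕ → Mz N
  | 0 => β
  | (t + 1) => sMap (chif χ f (t + 1)) (f (t + 1)) (vseq χ f β t)

lemma sMap_chif_succ (χ : Mz N → Mz N → ℂˣ)
    (hstar : ∀ ψ, Reachable χ ψ → ∀ i : Fin N,
      starB i (starB i ψ) = ψ ∧ sMap (starB i ψ) i = sMap ψ i)
    (f : ℕ → Fin N) (t : ℕ) :
    sMap (chif χ f (t + 1)) (f (t + 1)) = sMap (chif χ f t) (f (t + 1)) := by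
  have : chif χ f (t + 1) = starB (f (t + 1)) (chif χ f t) := rfl
  rw [this]
  exact (hstar (chif χ f t) (chif_reachable χ f t) (f (t + 1))).2

lemma wt_invariance (χ : Mz N → Mz N → ℂˣ)
    (hstar : ∀ ψ, Reachable χ ψ → ∀ i : Fin N,
      starB i (starB i ψ) = ψ ∧ sMap (starB i ψ) i = sMap ψ i)
    (f : ℕ → Fin N) (t : ℕ) (a b : Mz N) :
    χ (wt χ f t a) (wt χ f t b) = chif χ f t a b := by
  induction t generalizing a b with
  | zero => rfl
  | succ t ih =>
      have hwt : wt χ f (t + 1) = wt χ f t ∘ sMap (chif χ f (t + 1)) (f (t + 1)) := rfl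
      rw [hwt]
      simp only [Function.comp_apply]
      rw [sMap_chif_succ χ hstar f t, ih]
      rfl

lemma wt_vseq (χ : Mz N → Mz N → ℂˣ) (f : ℕ → Fin N) (β : Mz N) (t : ℕ) :
    wt χ f t (vseq χ f β t) = β := by
  induction t with
  | zero => rfl
  | succ t ih =>
      have hwt : wt χ f (t + 1) = wt χ f t ∘ sMap (chif χ f (t + 1)) (f (t + 1)) := rfl
      have hv : vseq χ f β (t + 1) = sMap (chif χ f (t + 1)) (f (t + 1)) (vseq χ f β t) := rfl
      rw [hwt, hv]
      simp only [Function.comp_apply]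
      rw [sMap_invol]
      exact ih

lemma wt_add (χ : Mz N → Mz N → ℂˣ) (f : ℕ → Fin N) (t : ℕ) (a b : Mz N) :
    wt χ f t (a + b) = wt χ f t a + wt χ f t b := by
  induction t generalizing a b with
  | zero => rfl
  | succ t ih =>
      have hwt : wt χ f (t + 1) = wt χ f t ∘ sMap (chif χ f (t + 1)) (f (t + 1)) := rfl
      rw [hwt]
      simp only [Function.comp_apply]
      rw [sMap_add, ih]

lemma wt_nonpos (χ : Mz N → Mz N → ℂˣ) (f : ℕ → Fin N) (n : ℕ)
    (hlong : wt χ f n '' Set.range (alphav (N := N)) =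
      (fun v : Mz N => -v) '' Set.range (alphav (N := N)))
    (v : Mz N) (hv : ∀ k, 0 ≤ v k) (k : Fin N) : wt χ f n v k ≤ 0 := by
  set W : Mz N →+ Mz N := AddMonoidHom.mk' (wt χ f n) (wt_add χ f n) with hW
  have hWneg : ∀ j : Fin N, ∃ j' : Fin N, W (alphav j) = -alphav j' := by
    intro j
    have : wt χ f n (alphav j) ∈ (fun v : Mz N => -v) '' Set.range (alphav (N := N)) := by
      rw [← hlong]
      exact ⟨alphav j, ⟨j, rfl⟩, rfl⟩
    obtain ⟨w, ⟨j', hj'⟩, hw⟩ := this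
    exact ⟨j', by rw [show W (alphav j) = wt χ f n (alphav j) from rfl, ← hw, ← hj']⟩
  have hdecomp : W v = v.sum fun j m => W (Finsupp.single j m) := by
    conv_lhs => rw [← Finsupp.sum_single v]
    exact map_finsuppSum W v Finsupp.single
  have : W v k = v.sum (fun j m => W (Finsupp.single j m)) k := by rw [hdecomp]
  rw [show wt χ f n v = W v from rfl, this]
  rw [Finsupp.sum, Finsupp.finset_sum_apply]
  apply Finset.sum_nonpos
  intro j hj
  have hsingle : Finsupp.single j (v j) = (v j) • alphav j := (smul_alphav j (v j)).symm
  rw [hsingle, map_zsmul]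
  obtain ⟨j', hj'⟩ := hWneg j
  rw [hj']
  rw [Finsupp.smul_apply, Finsupp.neg_apply]
  have h1 : (0 : ℤ) ≤ alphav (N := N) j' k := by
    unfold alphav
    rw [Finsupp.single_apply]
    split <;> norm_num
  have := mul_nonneg (hv j) h1
  simp only [smul_eq_mul]
  linarith

lemma hardClaim (χ : Mz N → Mz N → ℂˣ)
    (Rp : (Mz N → Mz N → ℂˣ) → Set (Mz N))
    (hRsub : ∀ ψ, Reachable χ ψ → Rp ψ ⊆ PosCone N)
    (hRrefl : ∀ ψ, Reachable χ ψ → ∀ i : Fin N,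
      sMap ψ i '' (Rp ψ \ {alphav i}) = Rp (starB i ψ) \ {alphav i})
    (hstar : ∀ ψ, Reachable χ ψ → ∀ i : Fin N,
      starB i (starB i ψ) = ψ ∧ sMap (starB i ψ) i = sMap ψ i)
    (f : ℕ → Fin N)
    (hlong : wt χ f (Rp χ).ncard '' Set.range (alphav (N := N)) =
      (fun v : Mz N => -v) '' Set.range (alphav (N := N)))
    (β : Mz N) (hβ : β ∈ Rp χ) :
    ∃ ψ, Reachable χ ψ ∧ ∃ i : Fin N, (χ β β : ℂˣ) = ψ (alphav i) (alphav i) := by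
  classical
  set n := (Rp χ).ncard with hn
  by_cases hex : ∃ t, vseq χ f β t = alphav (f (t + 1))
  · obtain ⟨t, ht⟩ := hex
    refine ⟨chif χ f t, chif_reachable χ f t, f (t + 1), ?_⟩
    have h1 : χ β β = χ (wt χ f t (vseq χ f β t)) (wt χ f t (vseq χ f β t)) := by
      rw [wt_vseq]
    rw [h1, wt_invariance χ hstar f t, ht]
  · push_neg at hex
    exfalso
    -- v t stays a positive root of chif t
    have hP : ∀ t, vseq χ f β t ∈ Rp (chif χ f t) := by
      intro t
      induction t with
      | zero => exact hβ
      | succ t ih =>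
          have hne : vseq χ f β t ≠ alphav (f (t + 1)) := hex t
          have hmem : vseq χ f β t ∈ Rp (chif χ f t) \ {alphav (f (t + 1))} := ⟨ih, hne⟩
          have himg : sMap (chif χ f t) (f (t + 1)) (vseq χ f β t) ∈
              Rp (starB (f (t + 1)) (chif χ f t)) \ {alphav (f (t + 1))} := by
            rw [← hRrefl (chif χ f t) (chif_reachable χ f t) (f (t + 1))]
            exact ⟨_, hmem, rfl⟩
          have hv : vseq χ f β (t + 1)
              = sMap (chif χ f t) (f (t + 1)) (vseq χ f β t) := by
            rw [show vseq χ f β (t + 1)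
              = sMap (chif χ f (t + 1)) (f (t + 1)) (vseq χ f β t) from rfl,
              sMap_chif_succ χ hstar f t]
          rw [hv]
          exact himg.1
    -- v n is in the positive cone, but wt n maps it to the negative cone, and wt n (v n) = β
    have hvn : vseq χ f β n ∈ PosCone N := hRsub (chif χ f n) (chif_reachable χ f n) (hP n)
    have hβneg : ∀ k, β k ≤ 0 := by
      intro k
      have := wt_nonpos χ f n hlong (vseq χ f β n) hvn.2 k
      rwa [wt_vseq] at this
    have hβpos := hRsub χ (reachable_refl χ) hβ
    apply hβpos.1
    ext k
    exact le_antisymm (hβneg k) (hβpos.2 k)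
end Helpers3

section Helpers4

lemma qfact_zero_of_root (q : ℂ) (hq1 : q ≠ 1) (m : ℕ) (hm : 0 < m) (h : q ^ m = 1) :
    qfact m q = 0 := by
  have hnum : qnum m q = 0 := by
    have := geom_sum_mul q m
    rw [h, sub_self] at this
    have hq : q - 1 ≠ 0 := sub_ne_zero.mpr hq1
    exact (mul_eq_zero.mp this).resolve_right hq
  unfold qfact
  apply Finset.prod_eq_zero (i := m - 1) (Finset.mem_range.mpr (by omega))
  rw [Nat.sub_add_cancel hm]
  exact hnum

lemma hbound_ne_top_of_root (q : ℂ) (hq1 : q ≠ 1) (m : ℕ) (hm : 0 < m) (h : q ^ m = 1) :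
    hbound q ≠ ⊤ := by
  unfold hbound
  rw [if_neg]
  · exact WithTop.natCast_ne_top _
  · push_neg
    exact ⟨m, by rw [qfact_zero_of_root q hq1 m hm h]⟩

lemma root_of_qfact_zero (q : ℂ) (m : ℕ) (h : qfact m q = 0) :
    ∃ d : ℕ, 0 < d ∧ q ^ d = 1 := by
  unfold qfact at h
  obtain ⟨j, hjm, hj⟩ := Finset.prod_eq_zero_iff.mp h
  have hq1 : q ≠ 1 := by
    intro hq
    subst hq
    unfold qnum at hj
    simp at hj
    exact Nat.cast_add_one_ne_zero j hj
  refine ⟨j + 1, Nat.succ_pos j, ?_⟩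
  have := geom_sum_mul q (j + 1)
  unfold qnum at hj
  rw [hj, zero_mul] at this
  have := sub_eq_zero.mp this.symm
  exact this

lemma exists_qfact_zero_of_hbound_ne_top (q : ℂ) (h : hbound q ≠ ⊤) :
    ∃ m : ℕ, qfact m q = 0 := by
  unfold hbound at h
  by_cases hc : ∀ m : ℕ, qfact m q ≠ 0
  · rw [if_pos hc] at h
    exact absurd rfl h
  · push_neg at hc
    exact hc

end Helpers4

/-- Let χ be of finite type, with U⁻(χ) presented by its Kharchenko PBW basis: a basis
indexed by the monomial exponents x with 0 ≤ x_y ≤ h^χ(ψ(y)) over an enumeration ψ of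
R⁺(χ). Then dim U⁻(χ) < ∞ if and only if for every χ' ∼ χ (obtained by finitely many
Lusztig twists) and every i, χ'(α_i, α_i) is a root of unity. -/
theorem finite_dim_iff_roots_of_unity {N : ℕ} (χ : Mz N → Mz N → ℂˣ) (hχ : IsBihom χ)
    (Rp : (Mz N → Mz N → ℂˣ) → Set (Mz N))
    (hRfin : (Rp χ).Finite)
    (hRsub : ∀ ψ, Reachable χ ψ → Rp ψ ⊆ PosCone N)
    (hRsimple : ∀ ψ, Reachable χ ψ → ∀ i : Fin N, alphav i ∈ Rp ψ)
    (hRrefl : ∀ ψ, Reachable χ ψ → ∀ i : Fin N,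
      sMap ψ i '' (Rp ψ \ {alphav i}) = Rp (starB i ψ) \ {alphav i})
    (hstar : ∀ ψ, Reachable χ ψ → ∀ i : Fin N,
      starB i (starB i ψ) = ψ ∧ sMap (starB i ψ) i = sMap ψ i)
    (hne1 : ∀ ψ, Reachable χ ψ → ∀ i : Fin N, (ψ (alphav i) (alphav i) : ℂ) ≠ 1)
    (f : ℕ → Fin N)
    (hpos : ∀ y : ℕ, 1 ≤ y → y ≤ (Rp χ).ncard - 1 →
      wt χ f y (alphav (f (y + 1))) ∈ Rp χ)
    (hlong : wt χ f (Rp χ).ncard '' Set.range (alphav (N := N)) =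
      (fun v : Mz N => -v) '' Set.range (alphav (N := N)))
    (k : ℕ) (ψroot : Fin k → Mz N) (hψinj : Function.Injective ψroot)
    (hψrange : Set.range ψroot = Rp χ)
    (V : Type) [AddCommGroup V] [Module ℂ V]
    (bV : Module.Basis {x : Fin k → ℕ //
      ∀ y : Fin k, ((x y : ℕ∞)) ≤ hbound (χ (ψroot y) (ψroot y))} ℂ V) :
    FiniteDimensional ℂ V ↔
      ∀ ψ, Reachable χ ψ → ∀ i : Fin N,
        ∃ m : ℕ, 0 < m ∧ (ψ (alphav i) (alphav i) : ℂ) ^ m = 1 := by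
  classical
  constructor
  · -- finite-dimensional ⟹ roots of unity
    intro hfd ψ hψ i
    haveI : Fintype {x : Fin k → ℕ //
        ∀ y : Fin k, ((x y : ℕ∞)) ≤ hbound (χ (ψroot y) (ψroot y))} :=
      FiniteDimensional.fintypeBasisIndex bV
    obtain ⟨l, hl⟩ := hψ
    have hαmem : alphav i ∈ Rp (l.foldl (fun ψ i => starB i ψ) χ) := by
      rw [← hl]
      exact hRsimple ψ ⟨l, hl⟩ i
    obtain ⟨γ, hγ, hval⟩ := easyClaim χ hχ Rp hRsimple hRrefl l (alphav i) hαmem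
    obtain ⟨y, hy⟩ : γ ∈ Set.range ψroot := by rw [hψrange]; exact hγ
    subst hy
    -- hbound at this root is not ⊤, else the basis index set would be infinite
    have hnt : hbound ((χ (ψroot y) (ψroot y) : ℂˣ) : ℂ) ≠ ⊤ := by
      intro htop
      set g : ℕ → {x : Fin k → ℕ //
          ∀ y : Fin k, ((x y : ℕ∞)) ≤ hbound (χ (ψroot y) (ψroot y))} :=
        fun n => ⟨fun z => if z = y then n else 0, by
          intro z
          by_cases hz : z = y
          · subst hz
            simp only [if_pos rfl]
            rw [htop]
            exact le_top
          · simp only [if_neg hz, Nat.cast_zero]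
            exact zero_le⟩ with hg
      have hginj : Function.Injective g := by
        intro a b hab
        have := congrArg (fun x => x.1 y) hab
        simpa [hg] using this
      haveI := Finite.of_injective g hginj; exact not_finite ℕ
    obtain ⟨m, hm⟩ := exists_qfact_zero_of_hbound_ne_top _ hnt
    obtain ⟨d, hd, hdq⟩ := root_of_qfact_zero _ m hm
    refine ⟨d, hd, ?_⟩
    rw [hl]
    have : ((l.foldl (fun ψ i => starB i ψ) χ) (alphav i) (alphav i) : ℂ)
        = ((χ (ψroot y) (ψroot y) : ℂˣ) : ℂ) := congrArg Units.val hval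
    rw [this]
    exact hdq
  · -- roots of unity ⟹ finite-dimensional
    intro h
    haveI : Finite {x : Fin k → ℕ //
        ∀ y : Fin k, ((x y : ℕ∞)) ≤ hbound (χ (ψroot y) (ψroot y))} := by
      have hnt : ∀ y : Fin k, hbound ((χ (ψroot y) (ψroot y) : ℂˣ) : ℂ) ≠ ⊤ := by
        intro y
        have hβ : ψroot y ∈ Rp χ := by rw [← hψrange]; exact ⟨y, rfl⟩
        obtain ⟨ψ', hre, i, hval⟩ :=
          hardClaim χ Rp hRsub hRrefl hstar f hlong (ψroot y) hβ
        obtain ⟨m, hm, hq⟩ := h ψ' hre i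
        have hcoe : ((χ (ψroot y) (ψroot y) : ℂˣ) : ℂ)
            = ((ψ' (alphav i) (alphav i) : ℂˣ) : ℂ) := congrArg Units.val hval
        refine hbound_ne_top_of_root _ ?_ m hm ?_
        · rw [hcoe]; exact hne1 ψ' hre i
        · rw [hcoe]; exact hq
      choose B hB using fun y => WithTop.ne_top_iff_exists.mp (hnt y)
      have hsub : {x : Fin k → ℕ |
          ∀ y : Fin k, ((x y : ℕ∞)) ≤ hbound (χ (ψroot y) (ψroot y))} ⊆
          Set.pi Set.univ (fun y => Set.Iic (B y)) := by
        intro x hx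
        intro y _
        have := hx y
        rw [← hB y] at this
        exact Nat.cast_le.mp this
      have hfin : {x : Fin k → ℕ |
          ∀ y : Fin k, ((x y : ℕ∞)) ≤ hbound (χ (ψroot y) (ψroot y))}.Finite :=
        Set.Finite.subset (Set.Finite.pi fun y => Set.finite_Iic (B y)) hsub
      exact hfin.to_subtype
    exact Module.Finite.of_basis bV
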